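/- The polynomials R_t(θ) = ((p−1)/p)·sin((t+1)θ)/sin θ + (2/p)·cos(tθ) satisfy ∫₀^π R_t(θ)² dν_p(θ) = (p+1)/p for every t ≥ 1, where dν_p = (2(p+1) sin²θ)/(π[(p^{1/2}+p^{−1/2})² − 4cos²θ]) dθ is the Kesten–Plancherel measure. -/

import Mathlib

open Real

namespace RtKestenAux

variable {p : ℝ}


lemma hasDeriv_G (hp : 1 < p) (θ : ℝ) :
    HasDerivAt (fun x => (2*x + 2 * Real.arctan (p⁻¹ * Real.sin (2*x) / (1 - p⁻¹ * Real.cos (2*x)))) / (2*p*(1-(p⁻¹)^2)))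
      (1 / (p + p⁻¹ - 2 * Real.cos (2*θ))) θ := by
  have hp0 : 0 < p := by linarith
  have hq1 : p⁻¹ < 1 := inv_lt_one_of_one_lt₀ hp
  have hq0 : 0 < p⁻¹ := inv_pos.mpr hp0
  set s := Real.sin (2*θ) with hs
  set c := Real.cos (2*θ) with hc
  have hc1 : c ≤ 1 := Real.cos_le_one _
  have hc1' : -1 ≤ c := Real.neg_one_le_cos _
  have hpy : s^2 + c^2 = 1 := Real.sin_sq_add_cos_sq (2*θ)
  have hd : 0 < 1 - p⁻¹ * c := by nlinarith
  have hE : 0 < 1 - 2*p⁻¹*c + (p⁻¹)^2 := by nlinarith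
  have hq2 : (0:ℝ) < 1 - (p⁻¹)^2 := by nlinarith
  have h2x : HasDerivAt (fun x : ℝ => 2*x) 2 θ := by
    simpa using (hasDerivAt_id θ).const_mul 2
  have hsin : HasDerivAt (fun x : ℝ => Real.sin (2*x)) (c * 2) θ :=
    (Real.hasDerivAt_sin (2*θ)).comp θ h2x
  have hcos : HasDerivAt (fun x : ℝ => Real.cos (2*x)) (-s * 2) θ :=
    (Real.hasDerivAt_cos (2*θ)).comp θ h2x
  have hnum : HasDerivAt (fun x : ℝ => p⁻¹ * Real.sin (2*x)) (p⁻¹ * (c * 2)) θ :=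
    hsin.const_mul p⁻¹
  have hden : HasDerivAt (fun x : ℝ => 1 - p⁻¹ * Real.cos (2*x)) (-(p⁻¹ * (-s * 2))) θ :=
    (hcos.const_mul p⁻¹).const_sub 1
  have hu := (hnum.div hden hd.ne').arctan
  have key : 1 / (1 + (p⁻¹ * s / (1 - p⁻¹ * c)) ^ 2) *
      ((p⁻¹ * (c * 2) * (1 - p⁻¹ * c) - p⁻¹ * s * -(p⁻¹ * (-s * 2))) / (1 - p⁻¹ * c) ^ 2)
      = (2*p⁻¹*c - 2*(p⁻¹)^2) / (1 - 2*p⁻¹*c + (p⁻¹)^2) := by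
    have h1u : 1 + (p⁻¹ * s / (1 - p⁻¹ * c)) ^ 2
        = (1 - 2*p⁻¹*c + (p⁻¹)^2) / (1 - p⁻¹ * c)^2 := by
      rw [eq_div_iff (by positivity), div_pow, add_mul, div_mul_eq_mul_div, mul_div_assoc,
        div_self (by positivity : (0:ℝ) < (1 - p⁻¹*c)^2).ne', mul_one]
      linear_combination (p⁻¹)^2 * hpy
    rw [h1u, one_div, inv_div, div_mul_div_comm, div_eq_div_iff (by positivity) (by positivity)]
    linear_combination (-(2*(p⁻¹)^2) * (1 - 2*p⁻¹*c + (p⁻¹)^2) * (1-p⁻¹*c)^2) * hpy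
  replace hu : HasDerivAt (fun x => Real.arctan (p⁻¹ * Real.sin (2*x) / (1 - p⁻¹ * Real.cos (2*x))))
      ((2*p⁻¹*c - 2*(p⁻¹)^2) / (1 - 2*p⁻¹*c + (p⁻¹)^2)) θ := by
    rw [← key]; exact hu
  have hfin := (h2x.add (hu.const_mul 2)).div_const (2*p*(1-(p⁻¹)^2))
  convert hfin using 1
  case e'_4 => rfl
  case e'_5 => rfl
  case e'_8 => rfl
  have hD : p + p⁻¹ - 2 * c = p * (1 - 2*p⁻¹*c + (p⁻¹)^2) := by
    field_simp; ring
  rw [hD]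
  have hR : 2 + 2 * ((2*p⁻¹*c - 2*(p⁻¹)^2) / (1 - 2*p⁻¹*c + (p⁻¹)^2))
      = (2 - 2*(p⁻¹)^2) / (1 - 2*p⁻¹*c + (p⁻¹)^2) := by
    rw [mul_div_assoc', eq_div_iff hE.ne', add_mul, div_mul_cancel₀ _ hE.ne']
    ring
  rw [hR, div_div, div_eq_div_iff (by positivity) (by positivity)]
  ring


lemma Dpos (hp : 1 < p) (θ : ℝ) : 0 < p + p⁻¹ - 2 * Real.cos (2*θ) := by
  have h1 : Real.cos (2*θ) ≤ 1 := Real.cos_le_one _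
  have hp0 : 0 < p := by linarith
  have key : 0 < p + p⁻¹ - 2 := by
    have h2 : p + p⁻¹ - 2 = (p-1)^2/p := by field_simp; ring
    rw [h2]
    exact div_pos (by nlinarith) hp0
  nlinarith

lemma intg (hp : 1 < p) {g : ℝ → ℝ} (hg : Continuous g) :
    IntervalIntegrable (fun θ => g θ / (p + p⁻¹ - 2 * Real.cos (2*θ))) MeasureTheory.volume 0 π := by
  apply Continuous.intervalIntegrable
  exact hg.div (by continuity) (fun θ => (Dpos hp θ).ne')

lemma intgc (hp : 1 < p) (r : ℝ) :
    IntervalIntegrable (fun θ => Real.cos (r*θ) / (p + p⁻¹ - 2 * Real.cos (2*θ))) MeasureTheory.volume 0 π :=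
  intg hp (by continuity)

lemma c0 (hp : 1 < p) :
    ∫ θ in (0:ℝ)..π, 1 / (p + p⁻¹ - 2 * Real.cos (2*θ)) = π * p / (p^2 - 1) := by
  have hp0 : 0 < p := by linarith
  have hq1 : p⁻¹ < 1 := inv_lt_one_of_one_lt₀ hp
  rw [intervalIntegral.integral_eq_sub_of_hasDerivAt (fun θ _ => hasDeriv_G hp θ)
      (intg hp continuous_const)]
  rw [mul_zero, Real.sin_two_pi, Real.cos_two_pi, Real.sin_zero, Real.cos_zero]
  rw [mul_zero, zero_div, Real.arctan_zero]
  have hq0 : 0 < p⁻¹ := inv_pos.mpr hp0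
  have hq2 : (0:ℝ) < 1 - (p⁻¹)^2 := by nlinarith
  have hp2 : (0:ℝ) < p^2 - 1 := by nlinarith
  norm_num
  rw [div_eq_div_iff (by have h := mul_pos (mul_pos two_pos hp0) hq2; rwa [inv_pow] at h : (0:ℝ) < 2 * p * (1 - (p^2)⁻¹)).ne' hp2.ne']
  field_simp

lemma cosint (k : ℕ) (hk : 1 ≤ k) :
    ∫ θ in (0:ℝ)..π, Real.cos (2*(k:ℝ)*θ) = 0 := by
  have h2k : (2*(k:ℝ)) ≠ 0 := by positivity
  rw [show (fun θ : ℝ => Real.cos (2*(k:ℝ)*θ)) = fun θ => Real.cos ((2*(k:ℝ))*θ) from rfl]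
  rw [intervalIntegral.integral_comp_mul_left Real.cos h2k, integral_cos]
  rw [mul_zero, show (2*(k:ℝ))*π = ((2*k : ℕ):ℝ)*π by push_cast; ring, Real.sin_nat_mul_pi, Real.sin_zero]
  simp

lemma cval (hp : 1 < p) (m : ℕ) :
    ∫ θ in (0:ℝ)..π, Real.cos (2*(m:ℝ)*θ) / (p + p⁻¹ - 2 * Real.cos (2*θ))
      = π * p / (p^2 - 1) * (p⁻¹)^m := by
  have hp0 : 0 < p := by linarith
  induction m using Nat.twoStepInduction with
  | zero =>
      simp only [Nat.cast_zero, mul_zero, zero_mul, Real.cos_zero, pow_zero, mul_one]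
      exact c0 hp
  | one =>
      have hid : Set.EqOn (fun θ => Real.cos (2*((1:ℕ):ℝ)*θ) / (p + p⁻¹ - 2 * Real.cos (2*θ)))
          (fun θ => (p+p⁻¹)/2 * (1 / (p + p⁻¹ - 2 * Real.cos (2*θ))) - 1/2) (Set.uIcc 0 π) := by
        intro θ _
        simp only
        set D := p + p⁻¹ - 2 * Real.cos (2*θ) with hDdef
        have hD : D ≠ 0 := (Dpos hp θ).ne'
        have hX : Real.cos (2*((1:ℕ):ℝ)*θ) = ((p+p⁻¹) - D)/2 := by
          rw [hDdef]; push_cast; ring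
        rw [hX]
        field_simp
      rw [intervalIntegral.integral_congr hid,
        intervalIntegral.integral_sub ((intg hp continuous_const).const_mul _) intervalIntegrable_const,
        intervalIntegral.integral_const_mul, c0 hp, intervalIntegral.integral_const]
      have hp2 : (0:ℝ) < p^2 - 1 := by nlinarith
      rw [sub_zero, smul_eq_mul, pow_one]
      field_simp
      ring
  | more m ih ih1 =>
      have hid : Set.EqOn (fun θ => Real.cos (2*((m+2:ℕ):ℝ)*θ) / (p + p⁻¹ - 2 * Real.cos (2*θ)))
          (fun θ => ((p+p⁻¹) * (Real.cos (2*((m+1:ℕ):ℝ)*θ) / (p + p⁻¹ - 2 * Real.cos (2*θ)))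
            - Real.cos (2*((m+1:ℕ):ℝ)*θ)) - Real.cos (2*(m:ℝ)*θ) / (p + p⁻¹ - 2 * Real.cos (2*θ)))
          (Set.uIcc 0 π) := by
        intro θ _
        have a1 : 2*((m+2:ℕ):ℝ)*θ = 2*((m+1:ℕ):ℝ)*θ + 2*θ := by push_cast; ring
        have a2 : 2*(m:ℝ)*θ = 2*((m+1:ℕ):ℝ)*θ - 2*θ := by push_cast; ring
        simp only
        set D := p + p⁻¹ - 2 * Real.cos (2*θ) with hDdef
        have hD : D ≠ 0 := (Dpos hp θ).ne'
        have hX : Real.cos (2*((m+2:ℕ):ℝ)*θ)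
            = (p+p⁻¹) * Real.cos (2*((m+1:ℕ):ℝ)*θ) - Real.cos (2*((m+1:ℕ):ℝ)*θ) * D
              - Real.cos (2*(m:ℝ)*θ) := by
          rw [hDdef, a1, a2, Real.cos_add, Real.cos_sub]
          ring
        rw [hX]
        field_simp
      have i1 : IntervalIntegrable (fun θ:ℝ => (p+p⁻¹) * (Real.cos (2*((m+1:ℕ):ℝ)*θ) / (p + p⁻¹ - 2*Real.cos (2*θ)))) MeasureTheory.volume 0 π := (intgc hp _).const_mul _
      have i2 : IntervalIntegrable (fun θ:ℝ => Real.cos (2*((m+1:ℕ):ℝ)*θ)) MeasureTheory.volume 0 π :=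
        (by continuity : Continuous fun θ:ℝ => Real.cos (2*((m+1:ℕ):ℝ)*θ)).intervalIntegrable 0 π
      have i3 := intgc hp (2*((m:ℕ):ℝ))
      rw [intervalIntegral.integral_congr hid,
        intervalIntegral.integral_sub (i1.sub i2) i3,
        intervalIntegral.integral_sub i1 i2,
        intervalIntegral.integral_const_mul, ih1, ih, cosint (m+1) (by omega)]
      have hq : p * p⁻¹ = 1 := mul_inv_cancel₀ hp0.ne'
      push_cast
      rw [sub_zero]
      have e1 : (p⁻¹:ℝ)^(m+1) = (p⁻¹)^m * p⁻¹ := pow_succ _ _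
      have e2 : (p⁻¹:ℝ)^(m+2) = (p⁻¹)^m * p⁻¹ * p⁻¹ := by rw [pow_succ, pow_succ]
      rw [e1, e2]
      linear_combination (π * p / (p^2-1) * (p⁻¹)^m) * hq

end RtKestenAux

open RtKestenAux in
theorem R_t_kesten_norm (p : ℝ) (hp : 1 < p) (t : ℕ) (ht : 1 ≤ t) :
    ∫ θ in (0 : ℝ)..Real.pi,
        (((p - 1) / p) * (Real.sin (((t : ℝ) + 1) * θ) / Real.sin θ) +
            (2 / p) * Real.cos ((t : ℝ) * θ)) ^ 2 *
          (2 * (p + 1) * Real.sin θ ^ 2 /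
            (Real.pi * ((p ^ ((1 : ℝ) / 2) + p ^ (-(1 : ℝ) / 2)) ^ 2 -
              4 * Real.cos θ ^ 2))) = (p + 1) / p := by
  obtain ⟨s, rfl⟩ : ∃ s, t = s + 1 := ⟨t - 1, by omega⟩
  have hp0 : 0 < p := by linarith
  have hq1 : p⁻¹ < 1 := inv_lt_one_of_one_lt₀ hp
  have hq0 : 0 < p⁻¹ := inv_pos.mpr hp0
  have hp2 : (0:ℝ) < p^2 - 1 := by nlinarith
  -- the denominator is D θ
  have hroot : p ^ ((1:ℝ)/2) * p ^ ((1:ℝ)/2) = p := by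
    rw [← Real.rpow_add hp0]; norm_num
  have hrneg : p ^ (-(1:ℝ)/2) = (p ^ ((1:ℝ)/2))⁻¹ := by
    rw [← Real.rpow_neg hp0.le]; norm_num
  have hr0 : (0:ℝ) < p ^ ((1:ℝ)/2) := Real.rpow_pos_of_pos hp0 _
  have hden : ∀ θ : ℝ, (p ^ ((1:ℝ)/2) + p ^ (-(1:ℝ)/2))^2 - 4 * Real.cos θ ^ 2
      = p + p⁻¹ - 2 * Real.cos (2*θ) := by
    intro θ
    have hc2 : Real.cos (2*θ) = 2 * Real.cos θ ^ 2 - 1 := Real.cos_two_mul θ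
    rw [hrneg, hc2]
    field_simp
    linear_combination (p * (p ^ ((1:ℝ)/2))^2 - 1) * hroot
  -- step 1
  have h1 : Set.EqOn
      (fun θ => (((p - 1) / p) * (Real.sin (((s + 1 : ℕ) : ℝ) * θ + θ) / Real.sin θ) +
            (2 / p) * Real.cos (((s + 1 : ℕ) : ℝ) * θ)) ^ 2 *
          (2 * (p + 1) * Real.sin θ ^ 2 /
            (Real.pi * (p + p⁻¹ - 2 * Real.cos (2*θ)))))
      (fun θ => (Real.sin (((s+1:ℕ):ℝ) * θ + θ) - p⁻¹ * Real.sin (((s+1:ℕ):ℝ) * θ - θ))^2 *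
          (2 * (p + 1) / (Real.pi * (p + p⁻¹ - 2 * Real.cos (2*θ)))))
      (Set.uIcc 0 π) := by
    intro θ hθ
    simp only
    set D := p + p⁻¹ - 2 * Real.cos (2*θ) with hDdef
    have hD : D ≠ 0 := (Dpos hp θ).ne'
    by_cases hs0 : Real.sin θ = 0
    · rw [Set.uIcc_of_le Real.pi_nonneg] at hθ
      have hθ0 : θ = 0 ∨ θ = π := by
        rcases eq_or_lt_of_le hθ.2 with h | h
        · right; exact h
        · left
          by_contra hne
          have hpos : 0 < θ := lt_of_le_of_ne hθ.1 (Ne.symm hne)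
          have := Real.sin_pos_of_pos_of_lt_pi hpos h
          linarith [this.ne' hs0]
      have hz1 : Real.sin (((s+1:ℕ):ℝ) * θ + θ) = 0 := by
        rcases hθ0 with rfl | rfl
        · simp
        · rw [show ((s+1:ℕ):ℝ) * π + π = ((s+2:ℕ):ℝ) * π by push_cast; ring,
            Real.sin_nat_mul_pi]
      have hz2 : Real.sin (((s+1:ℕ):ℝ) * θ - θ) = 0 := by
        rcases hθ0 with rfl | rfl
        · simp
        · rw [show ((s+1:ℕ):ℝ) * π - π = ((s:ℕ):ℝ) * π by push_cast; ring,
            Real.sin_nat_mul_pi]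
      rw [hs0, hz1, hz2]
      simp
    · have hsin2 : Real.sin θ ^ 2 ≠ 0 := pow_ne_zero _ hs0
      rw [Real.sin_add, Real.sin_sub]
      field_simp
      ring
  -- step 2
  have h2 : Set.EqOn
      (fun θ => (Real.sin (((s+1:ℕ):ℝ) * θ + θ) - p⁻¹ * Real.sin (((s+1:ℕ):ℝ) * θ - θ))^2 *
          (2 * (p + 1) / (Real.pi * (p + p⁻¹ - 2 * Real.cos (2*θ)))))
      (fun θ => (2*(p+1)/π) * ( (1+(p⁻¹)^2)/2 * (1 / (p + p⁻¹ - 2 * Real.cos (2*θ)))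
         - (1/2) * (Real.cos (2*((s+2:ℕ):ℝ)*θ) / (p + p⁻¹ - 2 * Real.cos (2*θ)))
         - p⁻¹ * (Real.cos (2*((1:ℕ):ℝ)*θ) / (p + p⁻¹ - 2 * Real.cos (2*θ)))
         + p⁻¹ * (Real.cos (2*((s+1:ℕ):ℝ)*θ) / (p + p⁻¹ - 2 * Real.cos (2*θ)))
         - ((p⁻¹)^2/2) * (Real.cos (2*((s:ℕ):ℝ)*θ) / (p + p⁻¹ - 2 * Real.cos (2*θ)))))
      (Set.uIcc 0 π) := by
    intro θ _
    simp only
    set D := p + p⁻¹ - 2 * Real.cos (2*θ) with hDdef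
    have hD : D ≠ 0 := (Dpos hp θ).ne'
    set a := ((s+1:ℕ):ℝ) * θ + θ with ha
    set b := ((s+1:ℕ):ℝ) * θ - θ with hb
    have k1 : Real.cos (2*((s+2:ℕ):ℝ)*θ) = 1 - 2 * Real.sin a ^ 2 := by
      rw [show 2*((s+2:ℕ):ℝ)*θ = 2*a by rw [ha]; push_cast; ring, Real.cos_two_mul]
      have := Real.sin_sq_add_cos_sq a; linarith
    have k4 : Real.cos (2*((s:ℕ):ℝ)*θ) = 1 - 2 * Real.sin b ^ 2 := by
      rw [show 2*((s:ℕ):ℝ)*θ = 2*b by rw [hb]; push_cast; ring, Real.cos_two_mul]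
      have := Real.sin_sq_add_cos_sq b; linarith
    have k2 : Real.cos (2*((1:ℕ):ℝ)*θ)
        = Real.cos a * Real.cos b + Real.sin a * Real.sin b := by
      rw [show 2*((1:ℕ):ℝ)*θ = a - b by rw [ha, hb]; push_cast; ring, Real.cos_sub]
    have k3 : Real.cos (2*((s+1:ℕ):ℝ)*θ)
        = Real.cos a * Real.cos b - Real.sin a * Real.sin b := by
      rw [show 2*((s+1:ℕ):ℝ)*θ = a + b by rw [ha, hb]; push_cast; ring, Real.cos_add]
    rw [k1, k2, k3, k4]
    field_simp
    ring
  rw [show (fun θ => (((p - 1) / p) * (Real.sin ((((s+1:ℕ):ℝ) + 1) * θ) / Real.sin θ) +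
            (2 / p) * Real.cos (((s+1:ℕ):ℝ) * θ)) ^ 2 *
          (2 * (p + 1) * Real.sin θ ^ 2 /
            (Real.pi * ((p ^ ((1 : ℝ) / 2) + p ^ (-(1 : ℝ) / 2)) ^ 2 -
              4 * Real.cos θ ^ 2))))
      = (fun θ => (((p - 1) / p) * (Real.sin (((s + 1 : ℕ) : ℝ) * θ + θ) / Real.sin θ) +
            (2 / p) * Real.cos (((s + 1 : ℕ) : ℝ) * θ)) ^ 2 *
          (2 * (p + 1) * Real.sin θ ^ 2 /
            (Real.pi * (p + p⁻¹ - 2 * Real.cos (2*θ))))) from by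
        funext θ; rw [hden θ, show (((s+1:ℕ):ℝ) + 1) * θ = ((s+1:ℕ):ℝ) * θ + θ by ring]]
  rw [intervalIntegral.integral_congr h1, intervalIntegral.integral_congr h2]
  -- step 3: split
  have j0 : IntervalIntegrable (fun θ:ℝ => (1+(p⁻¹)^2)/2 * (1 / (p + p⁻¹ - 2 * Real.cos (2*θ)))) MeasureTheory.volume 0 π :=
    (intg hp continuous_const).const_mul _
  have j1 : IntervalIntegrable (fun θ:ℝ => (1/2) * (Real.cos (2*((s+2:ℕ):ℝ)*θ) / (p + p⁻¹ - 2 * Real.cos (2*θ)))) MeasureTheory.volume 0 π :=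
    (intgc hp _).const_mul _
  have j2 : IntervalIntegrable (fun θ:ℝ => p⁻¹ * (Real.cos (2*((1:ℕ):ℝ)*θ) / (p + p⁻¹ - 2 * Real.cos (2*θ)))) MeasureTheory.volume 0 π :=
    (intgc hp _).const_mul _
  have j3 : IntervalIntegrable (fun θ:ℝ => p⁻¹ * (Real.cos (2*((s+1:ℕ):ℝ)*θ) / (p + p⁻¹ - 2 * Real.cos (2*θ)))) MeasureTheory.volume 0 π :=
    (intgc hp _).const_mul _
  have j4 : IntervalIntegrable (fun θ:ℝ => ((p⁻¹)^2/2) * (Real.cos (2*((s:ℕ):ℝ)*θ) / (p + p⁻¹ - 2 * Real.cos (2*θ)))) MeasureTheory.volume 0 π :=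
    (intgc hp _).const_mul _
  rw [intervalIntegral.integral_const_mul,
    intervalIntegral.integral_sub (((j0.sub j1).sub j2).add j3) j4,
    intervalIntegral.integral_add ((j0.sub j1).sub j2) j3,
    intervalIntegral.integral_sub (j0.sub j1) j2,
    intervalIntegral.integral_sub j0 j1]
  simp only [intervalIntegral.integral_const_mul]
  rw [c0 hp, cval hp (s+2), cval hp 1, cval hp (s+1), cval hp s]
  -- step 4: arithmetic
  have hq : p * p⁻¹ = 1 := mul_inv_cancel₀ hp0.ne'
  have e1 : (p⁻¹:ℝ)^(s+1) = (p⁻¹)^s * p⁻¹ := pow_succ _ _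
  have e2 : (p⁻¹:ℝ)^(s+2) = (p⁻¹)^s * p⁻¹ * p⁻¹ := by rw [pow_succ, pow_succ]
  rw [e1, e2, pow_one]
  field_simp
  ring
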